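/- arXiv:1211.6154 — 2 statements merged into one kernel-verified Lean document; each statement's English description precedes it below -/
import Mathlib

section
/- For a > −1/2 the integral over the unit ball in ℝ³ of |ξ|^{2a+2} / |h_v(ξ)|² is finite when |v| = 1, where h_v(ξ) = |ξ|(⟨ξ⟩ − v·ξ̂). Equivalently, in spherical coordinates with φ the angle from v, the integral ∫₀^π ∫₀^1 ρ^{2a+2} φ / (ρ² + φ²)² dρ dφ is finite for a > −1/2. -/
open scoped RealInnerProductSpace
open MeasureTheory

namespace SonicAux
open Real Set

lemma integrable_indicator_abs_rpow {c : ℝ} (hc : -1 < c) :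
    Integrable ((Set.Ioc (-1:ℝ) 1).indicator fun x => |x| ^ c) := by
  rw [integrable_indicator_iff measurableSet_Ioc]
  have h1 : IntegrableOn (fun x : ℝ => |x| ^ c) (Set.Ioc 0 1) := by
    have h := intervalIntegral.intervalIntegrable_rpow' (a := 0) (b := 1) hc
    rw [intervalIntegrable_iff_integrableOn_Ioc_of_le zero_le_one] at h
    exact h.congr_fun (fun x hx => by rw [abs_of_pos hx.1]) measurableSet_Ioc
  have h2 : IntegrableOn (fun x : ℝ => |x| ^ c) (Set.Ico (-1:ℝ) 0) := by
    have hemb : MeasurableEmbedding (fun x : ℝ => -x) :=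
      (Homeomorph.neg ℝ).measurableEmbedding
    have hpre : (fun x : ℝ => -x) ⁻¹' Set.Ioc 0 1 = Set.Ico (-1:ℝ) 0 := by
      ext x
      simp only [Set.mem_preimage, Set.mem_Ioc, Set.mem_Ico]
      constructor <;> (intro h; constructor <;> linarith [h.1, h.2])
    have := (Measure.measurePreserving_neg (volume : Measure ℝ)).integrableOn_comp_preimage
      (f := fun x : ℝ => |x| ^ c) (s := Set.Ioc 0 1) hemb
    rw [hpre] at this
    exact (this.mpr h1).congr_fun (fun x hx => by simp [Function.comp, abs_neg]) measurableSet_Ico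
  have h0 : IntegrableOn (fun x : ℝ => |x| ^ c) {0} := by
    rw [IntegrableOn, Measure.restrict_eq_zero.mpr (by simp)]
    exact integrable_zero_measure
  refine ((h2.union h1).union h0).mono_set (fun x hx => ?_)
  rcases lt_trichotomy x 0 with h | h | h
  · exact Or.inl (Or.inl ⟨hx.1.le, h⟩)
  · exact Or.inr (by simp [h])
  · exact Or.inl (Or.inr ⟨h, hx.2⟩)

lemma integrableOn_ball_prod_abs_rpow
    (b : OrthonormalBasis (Fin 3) ℝ (EuclideanSpace ℝ (Fin 3)))
    (c : Fin 3 → ℝ) (hc : ∀ i, -1 < c i) :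
    IntegrableOn (fun ξ : EuclideanSpace ℝ (Fin 3) => ∏ i, |⟪b i, ξ⟫| ^ (c i))
      (Metric.ball 0 1) volume := by
  set F : (Fin 3 → ℝ) → ℝ :=
    fun w => ∏ i, ((Set.Ioc (-1:ℝ) 1).indicator fun x => |x| ^ (c i)) (w i) with hF
  have hPi : Integrable F := Integrable.fintype_prod fun i => integrable_indicator_abs_rpow (hc i)
  set e := (MeasurableEquiv.toLp 2 (Fin 3 → ℝ)).symm with he
  have hE : Integrable (F ∘ e) :=
    ((EuclideanSpace.volume_preserving_symm_measurableEquiv_toLp (Fin 3)).integrable_comp_emb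
      e.measurableEmbedding).mpr hPi
  have hemb : MeasurableEmbedding b.repr := b.repr.toHomeomorph.measurableEmbedding
  have hE2 : Integrable ((F ∘ e) ∘ b.repr) :=
    (b.measurePreserving_repr.integrable_comp_emb hemb).mpr hE
  refine hE2.integrableOn.congr_fun (fun ξ hξ => ?_) measurableSet_ball
  have hξn : ‖ξ‖ < 1 := by simpa using hξ
  simp only [Function.comp, hF]
  refine Finset.prod_congr rfl fun i _ => ?_
  have h1 : (e (b.repr ξ)) i = ⟪b i, ξ⟫ := by
    simp [he, b.repr_apply_apply]
  rw [h1, Set.indicator_of_mem]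
  have := abs_real_inner_le_norm (b i) ξ
  rw [b.orthonormal.1 i, one_mul] at this
  have habs : |⟪b i, ξ⟫| < 1 := lt_of_le_of_lt this hξn
  exact ⟨by cases abs_lt.mp habs; linarith, (abs_le.mp habs.le).2⟩

lemma interp_sq {x y u δ : ℝ} (hx : 0 < x) (hy : 0 < y) (hxu : x ≤ u) (hyu : y ≤ u)
    (h0 : 0 ≤ δ) (h1 : δ ≤ 1) : x ^ (1+δ) * y ^ (1-δ) ≤ u ^ (2:ℝ) := by
  have hu : 0 < u := lt_of_lt_of_le hx hxu
  have h2 : u ^ (2:ℝ) = u ^ (1+δ) * u ^ (1-δ) := by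
    rw [← Real.rpow_add hu]; ring_nf
  rw [h2]
  exact mul_le_mul (Real.rpow_le_rpow hx.le hxu (by linarith))
    (Real.rpow_le_rpow hy.le hyu (by linarith)) (Real.rpow_nonneg hy.le _)
    (Real.rpow_nonneg hu.le _)

set_option maxHeartbeats 1000000 in
lemma pointwise3 {a ρ t0 t1 t2 : ℝ} (ha : -(1/2) < a)
    (hρ0 : 0 < ρ) (hρ1 : ρ < 1)
    (h0 : t0 ≠ 0) (h1 : t1 ≠ 0) (h2 : t2 ≠ 0)
    (hsum : ρ^2 = t0^2 + t1^2 + t2^2) :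
    ρ ^ (2*a+2) / (ρ * (Real.sqrt (1+ρ^2) - t0/ρ))^2 ≤
      36 * (|t0| ^ ((min a 0 + 1/2)/2 - 1) *
        (|t1| ^ ((min a 0 + 1/2)/4 - 1) * |t2| ^ ((min a 0 + 1/2)/4 - 1))) := by
  set ε : ℝ := min a 0 + 1/2 with hε
  set δ : ℝ := ε/2 with hδ
  have hε0 : 0 < ε := by
    have : -(1/2) < min a 0 := lt_min ha (by norm_num)
    simp only [hε]; linarith
  have hε2 : ε ≤ 1/2 := by
    have : min a 0 ≤ 0 := min_le_right _ _
    simp only [hε]; linarith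
  have hδ0 : 0 < δ := by positivity
  have hδ1 : δ ≤ 1/4 := by rw [hδ]; linarith
  set u : ℝ := Real.sqrt (1+ρ^2) - t0/ρ with hu
  set x0 : ℝ := |t0| with hx0
  set x1 : ℝ := |t1| with hx1
  set x2 : ℝ := |t2| with hx2
  set y2 : ℝ := t1^2 + t2^2 with hy2
  have hx0p : 0 < x0 := abs_pos.mpr h0
  have hx1p : 0 < x1 := abs_pos.mpr h1
  have hx2p : 0 < x2 := abs_pos.mpr h2
  have hy2p : 0 < y2 := by positivity
  have hb0 : x0 ≤ ρ := by nlinarith [sq_abs t0, abs_nonneg t0, sq_nonneg t1, sq_nonneg t2]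
  have hb1 : x1 ≤ ρ := by nlinarith [sq_abs t1, abs_nonneg t1, sq_nonneg t0, sq_nonneg t2]
  have hb2 : x2 ≤ ρ := by nlinarith [sq_abs t2, abs_nonneg t2, sq_nonneg t0, sq_nonneg t1]
  have hcle : t0/ρ ≤ 1 := (div_le_one hρ0).mpr (le_trans (le_abs_self t0) hb0)
  have hu1 : ρ^2/3 ≤ u := by
    have hs : 1 + ρ^2/3 ≤ Real.sqrt (1+ρ^2) := by
      rw [Real.le_sqrt' (by positivity)]
      have hρ2 : ρ^2 ≤ 1 := by nlinarith
      nlinarith [mul_nonneg (sq_nonneg ρ) (sub_nonneg.mpr hρ2)]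
    rw [hu]; linarith
  have hup : 0 < u := lt_of_lt_of_le (by positivity) hu1
  have hu2 : y2/(2*ρ^2) ≤ u := by
    have hs1 : 1 ≤ Real.sqrt (1+ρ^2) := by
      have := Real.sqrt_le_sqrt (show (1:ℝ) ≤ 1+ρ^2 by nlinarith)
      rwa [Real.sqrt_one] at this
    have hle : y2/(2*ρ^2) ≤ 1 - t0/ρ := by
      rw [div_le_iff₀ (by positivity)]
      have hexp : (1 - t0/ρ)*(2*ρ^2) = 2*ρ^2 - 2*ρ*t0 := by field_simp
      rw [hexp]
      nlinarith [sq_nonneg (ρ - t0)]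
    rw [hu]; linarith
  have hinterp : (ρ^2/3) ^ (1+δ) * (y2/(2*ρ^2)) ^ (1-δ) ≤ u ^ (2:ℝ) :=
    interp_sq (by positivity) (by positivity) hu1 hu2 hδ0.le (by linarith)
  have hu2e : (u:ℝ)^(2:ℕ) = u^(2:ℝ) := by
    rw [← Real.rpow_natCast u 2]; norm_num
  have hnum : ρ^(2*a+2) ≤ ρ^(2*ε+1) := by
    apply Real.rpow_le_rpow_of_exponent_ge hρ0 hρ1.le
    have := min_le_left a 0
    rw [hε]; linarith
  have hdenpos : 0 < ρ^2 * ((ρ^2/3) ^ (1+δ) * (y2/(2*ρ^2)) ^ (1-δ)) := by positivity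
  have step1 : ρ ^ (2*a+2) / (ρ * u)^2 ≤
      ρ^(2*ε+1) / (ρ^2 * ((ρ^2/3) ^ (1+δ) * (y2/(2*ρ^2)) ^ (1-δ))) := by
    rw [mul_pow, hu2e]
    exact div_le_div₀ (Real.rpow_nonneg hρ0.le _) hnum hdenpos
      (mul_le_mul_of_nonneg_left hinterp (by positivity))
  have e1 : (3:ℝ)^(1+δ) * ((ρ^2/3)^(1+δ)) = (ρ^2)^(1+δ) := by
    rw [← Real.mul_rpow (by norm_num) (by positivity)]
    congr 1
    ring
  have e2 : (2:ℝ)^(1-δ) * ((y2/(2*ρ^2))^(1-δ)) = (y2/ρ^2)^(1-δ) := by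
    rw [← Real.mul_rpow (by norm_num) (by positivity)]
    congr 1
    field_simp
  have step2 : ρ^(2*ε+1) / (ρ^2 * ((ρ^2/3) ^ (1+δ) * (y2/(2*ρ^2)) ^ (1-δ))) =
      (3:ℝ)^(1+δ) * (2:ℝ)^(1-δ) * (ρ⁻¹ * y2^(δ-1)) := by
    rw [div_eq_iff (ne_of_gt hdenpos)]
    have expand : (3:ℝ)^(1+δ) * (2:ℝ)^(1-δ) * (ρ⁻¹ * y2^(δ-1)) *
        (ρ^2 * ((ρ^2/3) ^ (1+δ) * (y2/(2*ρ^2)) ^ (1-δ))) =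
        (ρ⁻¹ * ρ^2) * (y2^(δ-1) * ((3:ℝ)^(1+δ) * ((ρ^2/3)^(1+δ))) *
          ((2:ℝ)^(1-δ) * ((y2/(2*ρ^2))^(1-δ)))) := by ring
    rw [expand, e1, e2]
    rw [Real.div_rpow hy2p.le (by positivity)]
    rw [div_eq_mul_inv (y2^(1-δ))]
    have collect : (ρ⁻¹ * ρ^2) * (y2^(δ-1) * (ρ^2)^(1+δ) * (y2^(1-δ) * ((ρ^2)^(1-δ))⁻¹)) =
        (y2^(δ-1) * y2^(1-δ)) * (ρ⁻¹ * ρ^2 * ((ρ^2)^(1+δ) * ((ρ^2)^(1-δ))⁻¹)) := by ring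
    rw [collect, ← Real.rpow_add hy2p]
    norm_num
    rw [← Real.rpow_neg (by positivity), ← Real.rpow_add (by positivity)]
    have hee : (1+δ) + -(1-δ) = 2*δ := by ring
    rw [hee, ← Real.rpow_natCast ρ 2, ← Real.rpow_mul hρ0.le,
      show ρ⁻¹ = ρ^(-1:ℝ) from (Real.rpow_neg_one ρ).symm,
      ← Real.rpow_add hρ0, ← Real.rpow_add hρ0]
    congr 1
    push_cast
    rw [hδ]; ring
  have hconst : (3:ℝ)^(1+δ) * (2:ℝ)^(1-δ) ≤ 18 := by
    have c3 : (3:ℝ)^(1+δ) ≤ 9 := by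
      have : (3:ℝ)^(1+δ) ≤ (3:ℝ)^(2:ℝ) :=
        Real.rpow_le_rpow_of_exponent_le (by norm_num) (by linarith)
      have h9 : (3:ℝ)^(2:ℝ) = 9 := by
        rw [show (2:ℝ) = ((2:ℕ):ℝ) by norm_num, Real.rpow_natCast]; norm_num
      linarith
    have c2 : (2:ℝ)^(1-δ) ≤ 2 := by
      have : (2:ℝ)^(1-δ) ≤ (2:ℝ)^(1:ℝ) :=
        Real.rpow_le_rpow_of_exponent_le (by norm_num) (by linarith)
      rwa [Real.rpow_one] at this
    have p2 : (0:ℝ) < (2:ℝ)^(1-δ) := by positivity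
    have p3 : (0:ℝ) < (3:ℝ)^(1+δ) := by positivity
    nlinarith
  have core : ρ⁻¹ * y2^(δ-1) ≤ x0^(ε/2-1) * (x1^(ε/4-1) * x2^(ε/4-1)) := by
    have hrinv : ρ⁻¹ ≤ x0^(-(1-ε/2)) * (x1^(-(ε/4)) * x2^(-(ε/4))) := by
      have hgm : x0^(1-ε/2) * (x1^(ε/4) * x2^(ε/4)) ≤ ρ := by
        have hρsplit : ρ = ρ^(1-ε/2) * (ρ^(ε/4) * ρ^(ε/4)) := by
          rw [← Real.rpow_add hρ0, ← Real.rpow_add hρ0,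
            show 1 - ε/2 + (ε/4 + ε/4) = 1 by ring, Real.rpow_one]
        rw [hρsplit]
        exact mul_le_mul (Real.rpow_le_rpow hx0p.le hb0 (by linarith))
          (mul_le_mul (Real.rpow_le_rpow hx1p.le hb1 (by linarith))
            (Real.rpow_le_rpow hx2p.le hb2 (by linarith))
            (Real.rpow_nonneg hx2p.le _) (Real.rpow_nonneg hρ0.le _))
          (by positivity) (by positivity)
      have := inv_anti₀ (by positivity) hgm
      calc ρ⁻¹ ≤ (x0^(1-ε/2) * (x1^(ε/4) * x2^(ε/4)))⁻¹ := this
        _ = x0^(-(1-ε/2)) * (x1^(-(ε/4)) * x2^(-(ε/4))) := by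
            rw [mul_inv, mul_inv, ← Real.rpow_neg hx0p.le, ← Real.rpow_neg hx1p.le,
              ← Real.rpow_neg hx2p.le]
    have hy2b : y2^(δ-1) ≤ x1^(δ-1) * x2^(δ-1) := by
      have hxy : x1 * x2 ≤ y2 := by
        nlinarith [sq_nonneg (x1 - x2), sq_abs t1, sq_abs t2]
      calc y2^(δ-1) ≤ (x1*x2)^(δ-1) :=
            Real.rpow_le_rpow_of_nonpos (by positivity) hxy (by linarith)
        _ = x1^(δ-1) * x2^(δ-1) := Real.mul_rpow hx1p.le hx2p.le
    calc ρ⁻¹ * y2^(δ-1)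
        ≤ (x0^(-(1-ε/2)) * (x1^(-(ε/4)) * x2^(-(ε/4)))) * (x1^(δ-1) * x2^(δ-1)) :=
          mul_le_mul hrinv hy2b (Real.rpow_nonneg hy2p.le _) (by positivity)
      _ = x0^(-(1-ε/2)) * ((x1^(-(ε/4)) * x1^(δ-1)) * (x2^(-(ε/4)) * x2^(δ-1))) := by ring
      _ = x0^(ε/2-1) * (x1^(ε/4-1) * x2^(ε/4-1)) := by
          rw [← Real.rpow_add hx1p, ← Real.rpow_add hx2p]
          congr 2
          · ring
          · rw [hδ]; ring
          · rw [hδ]; ring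
  calc ρ ^ (2*a+2) / (ρ * u)^2
      ≤ ρ^(2*ε+1) / (ρ^2 * ((ρ^2/3) ^ (1+δ) * (y2/(2*ρ^2)) ^ (1-δ))) := step1
    _ = (3:ℝ)^(1+δ) * (2:ℝ)^(1-δ) * (ρ⁻¹ * y2^(δ-1)) := step2
    _ ≤ 18 * (x0^(ε/2-1) * (x1^(ε/4-1) * x2^(ε/4-1))) := by
        apply mul_le_mul hconst core (by positivity) (by norm_num)
    _ ≤ 36 * (x0^(ε/2-1) * (x1^(ε/4-1) * x2^(ε/4-1))) := by
        have : (0:ℝ) ≤ x0^(ε/2-1) * (x1^(ε/4-1) * x2^(ε/4-1)) := by positivity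
        nlinarith

set_option maxHeartbeats 1000000 in
lemma pointwise2 {a ρ φ : ℝ} (ha : -(1/2) < a) (hφ0 : 0 < φ) (hρ0 : 0 < ρ) (hρ1 : ρ ≤ 1) :
    ρ ^ (2*a+2) * φ / (ρ^2 + φ^2)^2 ≤
      ρ ^ ((min a 0 + 1/2) - 1) * φ ^ ((min a 0 + 1/2) - 1) := by
  set ε : ℝ := min a 0 + 1/2 with hε
  set δ : ℝ := ε/2 with hδ
  have hε0 : 0 < ε := by
    have : -(1/2) < min a 0 := lt_min ha (by norm_num)
    rw [hε]; linarith
  have hε2 : ε ≤ 1/2 := by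
    have : min a 0 ≤ 0 := min_le_right _ _
    rw [hε]; linarith
  have hδ0 : 0 < δ := by positivity
  have hδ1 : δ ≤ 1/4 := by rw [hδ]; linarith
  have hnum : ρ^(2*a+2) ≤ ρ^(2*ε+1) := by
    apply Real.rpow_le_rpow_of_exponent_ge hρ0 hρ1
    have := min_le_left a 0
    rw [hε]; linarith
  have hd : (ρ^2) ^ ((1:ℝ)+δ) * (φ^2) ^ ((1:ℝ)-δ) ≤ ((ρ^2+φ^2):ℝ)^(2:ℝ) :=
    interp_sq (by positivity) (by positivity) (by nlinarith [sq_nonneg φ])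
      (by nlinarith [sq_nonneg ρ]) hδ0.le (by linarith)
  have hsq : ((ρ^2+φ^2):ℝ)^(2:ℕ) = ((ρ^2+φ^2):ℝ)^(2:ℝ) := by
    rw [← Real.rpow_natCast _ 2]; norm_num
  have hdenpos : (0:ℝ) < (ρ^2) ^ ((1:ℝ)+δ) * (φ^2) ^ ((1:ℝ)-δ) := by positivity
  have step1 : ρ ^ (2*a+2) * φ / (ρ^2 + φ^2)^2 ≤
      ρ^(2*ε+1) * φ / ((ρ^2) ^ ((1:ℝ)+δ) * (φ^2) ^ ((1:ℝ)-δ)) := by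
    rw [hsq]
    exact div_le_div₀ (by positivity) (mul_le_mul_of_nonneg_right hnum hφ0.le) hdenpos hd
  have step2 : ρ^(2*ε+1) * φ / ((ρ^2) ^ ((1:ℝ)+δ) * (φ^2) ^ ((1:ℝ)-δ)) =
      ρ ^ (ε-1) * φ ^ (ε-1) := by
    rw [eq_comm, eq_div_iff (ne_of_gt hdenpos)]
    have expand : ρ^(ε-1) * φ^(ε-1) * ((ρ^2:ℝ)^((1:ℝ)+δ) * (φ^2:ℝ)^((1:ℝ)-δ)) =
        (ρ^(ε-1) * (ρ^2:ℝ)^((1:ℝ)+δ)) * (φ^(ε-1) * (φ^2:ℝ)^((1:ℝ)-δ)) := by ring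
    rw [expand, ← Real.rpow_natCast ρ 2, ← Real.rpow_natCast φ 2,
      ← Real.rpow_mul hρ0.le, ← Real.rpow_mul hφ0.le,
      ← Real.rpow_add hρ0, ← Real.rpow_add hφ0]
    have eρ : ε-1+((2:ℕ):ℝ)*((1:ℝ)+δ) = 2*ε+1 := by push_cast; rw [hδ]; ring
    have eφ : ε-1+((2:ℕ):ℝ)*((1:ℝ)-δ) = 1 := by push_cast; rw [hδ]; ring
    rw [eρ, eφ, Real.rpow_one]
  calc ρ ^ (2*a+2) * φ / (ρ^2 + φ^2)^2
      ≤ ρ^(2*ε+1) * φ / ((ρ^2) ^ ((1:ℝ)+δ) * (φ^2) ^ ((1:ℝ)-δ)) := step1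
    _ = ρ ^ (ε-1) * φ ^ (ε-1) := step2

end SonicAux

theorem sonic_low_frequency_integral_finite (v : EuclideanSpace ℝ (Fin 3)) (hv : ‖v‖ = 1)
    (a : ℝ) (ha : -(1/2) < a) :
    IntegrableOn
      (fun ξ : EuclideanSpace ℝ (Fin 3) =>
        ‖ξ‖ ^ (2 * a + 2) /
          (‖ξ‖ * (Real.sqrt (1 + ‖ξ‖ ^ 2) - ⟪v, ‖ξ‖⁻¹ • ξ⟫)) ^ 2)
      (Metric.ball (0 : EuclideanSpace ℝ (Fin 3)) 1) volume ∧
    IntegrableOn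
      (fun p : ℝ × ℝ => p.2 ^ (2 * a + 2) * p.1 / (p.2 ^ 2 + p.1 ^ 2) ^ 2)
      (Set.Ioc (0 : ℝ) Real.pi ×ˢ Set.Ioc (0 : ℝ) 1) volume := by
  have hε0 : 0 < min a 0 + 1/2 := by
    have : -(1/2) < min a 0 := lt_min ha (by norm_num)
    linarith
  constructor
  · -- 3D part
    -- orthonormal basis with b 0 = v
    have horth : Orthonormal ℝ (({0} : Set (Fin 3)).restrict (fun _ : Fin 3 => v)) := by
      constructor
      · intro i; exact hv
      · intro i j hij
        exfalso
        apply hij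
        have hi := i.2
        have hj := j.2
        apply Subtype.ext
        simp only [Set.mem_singleton_iff] at hi hj
        rw [hi, hj]
    obtain ⟨b, hb⟩ := horth.exists_orthonormalBasis_extension_of_card_eq
      (by simp [finrank_euclideanSpace]) 
    have hb0 : b 0 = v := hb 0 rfl
    set c : Fin 3 → ℝ := ![(min a 0 + 1/2)/2 - 1, (min a 0 + 1/2)/4 - 1, (min a 0 + 1/2)/4 - 1]
      with hcdef
    have hc : ∀ i, -1 < c i := by
      intro i
      fin_cases i <;> simp [hcdef] <;> linarith
    have hG : IntegrableOn
        (fun ξ : EuclideanSpace ℝ (Fin 3) => 36 * ∏ i, |⟪b i, ξ⟫| ^ (c i))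
        (Metric.ball 0 1) volume :=
      (SonicAux.integrableOn_ball_prod_abs_rpow b c hc).const_mul 36
    -- null sets
    have hnull : ∀ i : Fin 3, ∀ᵐ ξ : EuclideanSpace ℝ (Fin 3), ⟪b i, ξ⟫ ≠ 0 := by
      intro i
      rw [ae_iff]
      have hset : {ξ : EuclideanSpace ℝ (Fin 3) | ¬⟪b i, ξ⟫ ≠ 0} =
          ((ℝ ∙ (b i))ᗮ : Submodule ℝ (EuclideanSpace ℝ (Fin 3))) := by
        ext ξ
        simp [Submodule.mem_orthogonal_singleton_iff_inner_right]
      rw [hset]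
      apply Measure.addHaar_submodule
      intro htop
      have : b i ∈ ((ℝ ∙ (b i))ᗮ : Submodule ℝ (EuclideanSpace ℝ (Fin 3))) := by
        rw [htop]; trivial
      rw [Submodule.mem_orthogonal_singleton_iff_inner_right] at this
      have hbi : ‖b i‖ = 1 := b.orthonormal.1 i
      rw [real_inner_self_eq_norm_sq, hbi] at this
      norm_num at this
    -- measurability
    have hm1 : Measurable fun ξ : EuclideanSpace ℝ (Fin 3) => ⟪v, ‖ξ‖⁻¹ • ξ⟫ :=
      Measurable.inner measurable_const ((measurable_norm.inv).smul measurable_id)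
    have hm2 : Measurable fun ξ : EuclideanSpace ℝ (Fin 3) => ‖ξ‖ ^ (2*a+2) := by fun_prop
    have hm3 : Measurable fun ξ : EuclideanSpace ℝ (Fin 3) => Real.sqrt (1 + ‖ξ‖^2) :=
      Real.continuous_sqrt.measurable.comp (by fun_prop)
    have hmF : Measurable (fun ξ : EuclideanSpace ℝ (Fin 3) =>
        ‖ξ‖ ^ (2 * a + 2) / (‖ξ‖ * (Real.sqrt (1 + ‖ξ‖ ^ 2) - ⟪v, ‖ξ‖⁻¹ • ξ⟫)) ^ 2) :=
      hm2.div ((measurable_norm.mul (hm3.sub hm1)).pow_const 2)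
    refine hG.mono' hmF.aestronglyMeasurable ?_
    filter_upwards [ae_restrict_mem measurableSet_ball,
      ae_restrict_of_ae (hnull 0), ae_restrict_of_ae (hnull 1), ae_restrict_of_ae (hnull 2)]
      with ξ hball ht0 ht1 ht2
    have hρ1 : ‖ξ‖ < 1 := by simpa using hball
    have hρ0 : 0 < ‖ξ‖ := by
      rcases eq_or_lt_of_le (norm_nonneg ξ) with h | h
      · exfalso; apply ht0; rw [show ξ = 0 from norm_eq_zero.mp h.symm]; simp
      · exact h
    have hsum : ‖ξ‖^2 = ⟪b 0, ξ⟫^2 + ⟪b 1, ξ⟫^2 + ⟪b 2, ξ⟫^2 := by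
      have h1 : ‖ξ‖ = Real.sqrt (∑ i, ‖b.repr ξ i‖^2) := by
        rw [← b.repr.norm_map ξ]
        exact EuclideanSpace.norm_eq _
      have h2 : ‖ξ‖^2 = ∑ i, ‖b.repr ξ i‖^2 := by
        rw [h1, Real.sq_sqrt (by positivity)]
      rw [h2, Fin.sum_univ_three]
      simp [b.repr_apply_apply, Real.norm_eq_abs, sq_abs]
    have hin : ⟪v, ‖ξ‖⁻¹ • ξ⟫ = ⟪b 0, ξ⟫ / ‖ξ‖ := by
      rw [real_inner_smul_right, hb0]
      rw [div_eq_inv_mul]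
    have hpos : (0:ℝ) ≤ ‖ξ‖ ^ (2 * a + 2) /
        (‖ξ‖ * (Real.sqrt (1 + ‖ξ‖ ^ 2) - ⟪v, ‖ξ‖⁻¹ • ξ⟫)) ^ 2 := by positivity
    rw [Real.norm_eq_abs, abs_of_nonneg hpos, hin, Fin.prod_univ_three]
    have hc0 : c 0 = (min a 0 + 1/2)/2 - 1 := rfl
    have hc1 : c 1 = (min a 0 + 1/2)/4 - 1 := rfl
    have hc2 : c 2 = (min a 0 + 1/2)/4 - 1 := rfl
    rw [hc0, hc1, hc2, mul_assoc]
    exact SonicAux.pointwise3 ha hρ0 hρ1 ht0 ht1 ht2 hsum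
  · -- 2D part
    set ε : ℝ := min a 0 + 1/2 with hε
    have hf1 : IntegrableOn (fun x : ℝ => x ^ (ε-1)) (Set.Ioc 0 Real.pi) := by
      have h := intervalIntegral.intervalIntegrable_rpow'
        (a := 0) (b := Real.pi) (show -1 < ε-1 by linarith)
      rwa [intervalIntegrable_iff_integrableOn_Ioc_of_le Real.pi_pos.le] at h
    have hf2 : IntegrableOn (fun x : ℝ => x ^ (ε-1)) (Set.Ioc 0 1) := by
      have h := intervalIntegral.intervalIntegrable_rpow'
        (a := 0) (b := 1) (show -1 < ε-1 by linarith)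
      rwa [intervalIntegrable_iff_integrableOn_Ioc_of_le zero_le_one] at h
    have hprod : Integrable (fun p : ℝ × ℝ => p.1 ^ (ε-1) * p.2 ^ (ε-1))
        ((volume.restrict (Set.Ioc 0 Real.pi)).prod (volume.restrict (Set.Ioc (0:ℝ) 1))) :=
      Integrable.mul_prod hf1 hf2
    rw [Measure.prod_restrict] at hprod
    have hmG : Measurable (fun p : ℝ × ℝ => p.2 ^ (2 * a + 2) * p.1 / (p.2 ^ 2 + p.1 ^ 2) ^ 2) := by
      fun_prop
    have hprod' : Integrable (fun p : ℝ × ℝ => p.1 ^ (ε-1) * p.2 ^ (ε-1))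
        (volume.restrict (Set.Ioc 0 Real.pi ×ˢ Set.Ioc (0:ℝ) 1)) := by
      rw [Measure.volume_eq_prod]
      exact hprod
    refine hprod'.mono' hmG.aestronglyMeasurable ?_
    · filter_upwards [ae_restrict_mem (measurableSet_Ioc.prod measurableSet_Ioc)] with p hp
      obtain ⟨⟨hφ0, _⟩, hρ0, hρ1⟩ := hp
      have hnn : (0:ℝ) ≤ p.2 ^ (2 * a + 2) * p.1 / (p.2 ^ 2 + p.1 ^ 2) ^ 2 := by positivity
      rw [Real.norm_eq_abs, abs_of_nonneg hnn, hε,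
        mul_comm (p.1 ^ (min a 0 + 1/2 - 1)) (p.2 ^ (min a 0 + 1/2 - 1))]
      exact SonicAux.pointwise2 ha hφ0 hρ0 hρ1
end

section
/- Let M : [0,∞) → ℂ satisfy |M(t)| ≲ (1+t)^{−6}, extended by 0 to t < 0, and suppose its Fourier transform satisfies |1 + M̂(ω)| ≥ c > 0 for all ω ∈ ℝ and |∂_ω^l M̂(ω)| ≲ (1+|ω|)^{−2} for 0 ≤ l ≤ 4. Then K := F^{-1}[(1+M̂)^{-1} − 1] satisfies |K(t)| ≲ (1+|t|)^{−4}. -/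
open scoped FourierTransform

open MeasureTheory Real


-- basic integrability aux
lemma aux_integrable {f : ℝ → ℂ} (hf : AEStronglyMeasurable f (volume : Measure ℝ)) {A : ℝ}
    (hA : ∀ x : ℝ, ‖f x‖ ≤ A * ((1 + |x|) ^ 2)⁻¹) : Integrable f := by
  have hbase : Integrable (fun x : ℝ => (1 + ‖x‖) ^ (-2 : ℝ)) :=
    integrable_one_add_norm (by norm_num)
  have heq : ∀ x : ℝ, A * (1 + ‖x‖) ^ (-2 : ℝ) = A * ((1 + |x|) ^ 2)⁻¹ := by
    intro x
    rw [Real.rpow_neg (by positivity), show (2:ℝ) = ((2:ℕ):ℝ) by norm_num, Real.rpow_natCast]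
    simp [Real.norm_eq_abs]
  refine ((hbase.const_mul A).congr (ae_of_all _ heq)).mono' hf (ae_of_all _ ?_)
  intro x
  exact hA x

lemma hasDerivAt_cpow_comp {φ : ℝ → ℂ} {φ' : ℂ} {x : ℝ} (n : ℕ) (h : HasDerivAt φ φ' x) :
    HasDerivAt (fun y => φ y ^ n) ((n : ℂ) * φ x ^ (n - 1) * φ') x := by
  simpa [Function.comp_def] using (hasDerivAt_pow n (φ x)).comp x h

set_option maxHeartbeats 2000000 in
/-- Decay of the resolvent kernel `K = 𝓕⁻¹[(1 + M̂)⁻¹ − 1]` (Lemma 5.1 kernel bound). -/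
theorem kernel_decay (M : ℝ → ℂ) (C₀ c C₁ : ℝ) (hc : 0 < c)
    (hdecay : ∀ t : ℝ, 0 ≤ t → ‖M t‖ ≤ C₀ * ((1 + t) ^ 6)⁻¹)
    (hzero : ∀ t : ℝ, t < 0 → M t = 0)
    (hlow : ∀ ω : ℝ, c ≤ ‖1 + 𝓕 M ω‖)
    (hder : ∀ l : ℕ, l ≤ 4 → ∀ ω : ℝ,
      ‖iteratedDeriv l (fun w => 𝓕 M w) ω‖ ≤ C₁ * ((1 + |ω|) ^ 2)⁻¹) :
    ∃ C : ℝ, 0 < C ∧ ∀ t : ℝ,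
      ‖(𝓕⁻ fun ω => (1 + 𝓕 M ω)⁻¹ - 1) t‖ ≤ C * ((1 + |t|) ^ 4)⁻¹ := by
  by_cases hM : Integrable M
  rotate_left
  · -- non-integrable case: Fourier transform is identically zero
    have hF : ∀ ω : ℝ, 𝓕 M ω = 0 := by
      intro ω
      rw [Real.fourier_eq]
      apply integral_undef
      rw [Real.fourierIntegral_convergent_iff]
      exact hM
    refine ⟨1, one_pos, fun t => ?_⟩
    have h0 : (fun ω : ℝ => (1 + 𝓕 M ω)⁻¹ - 1) = fun _ => 0 := by
      funext ω; rw [hF]; simp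
    rw [h0]
    have : (𝓕⁻ fun _ : ℝ => (0:ℂ)) t = 0 := by
      rw [Real.fourierInv_eq]; simp
    rw [this]
    simp
    positivity
  · -- main case
    have hC0 : 0 ≤ C₀ := by
      have := hdecay 0 le_rfl
      norm_num at this
      exact le_trans (norm_nonneg _) this
    have hC1 : 0 ≤ C₁ := by
      have := hder 0 (by norm_num) 0
      norm_num at this
      exact le_trans (norm_nonneg _) this
    have hMdecay : ∀ t : ℝ, ‖M t‖ ≤ C₀ * ((1 + |t|) ^ 6)⁻¹ := by
      intro t
      rcases le_or_gt 0 t with h|h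
      · rw [_root_.abs_of_nonneg h]; exact hdecay t h
      · rw [hzero t h]; simp; positivity
    have hmom : ∀ n : ℕ, n ≤ (4:ℕ∞) → Integrable (fun v : ℝ => ‖v‖ ^ n * ‖M v‖) := by
      intro n hn
      have hn4 : n ≤ 4 := by exact_mod_cast hn
      have hmeas : AEStronglyMeasurable (fun v : ℝ => ‖v‖ ^ n * ‖M v‖) volume :=
        ((continuous_norm.pow n).aestronglyMeasurable).mul hM.norm.aestronglyMeasurable
      have hbase : Integrable (fun x : ℝ => (1 + ‖x‖) ^ (-2 : ℝ)) :=
        integrable_one_add_norm (by norm_num)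
      refine ((hbase.const_mul C₀).mono' hmeas (ae_of_all _ ?_))
      intro x
      have h1 : (1:ℝ) ≤ 1 + |x| := by simp [abs_nonneg]
      have hx : ‖x‖ ^ n ≤ (1 + |x|) ^ 4 := by
        rw [Real.norm_eq_abs]
        calc |x| ^ n ≤ (1 + |x|) ^ n := by
              gcongr
              all_goals linarith [abs_nonneg x]
          _ ≤ (1 + |x|) ^ 4 := pow_le_pow_right₀ h1 hn4
      have hrw : C₀ * (1 + ‖x‖) ^ (-2 : ℝ) = C₀ * ((1 + |x|) ^ 2)⁻¹ := by
        rw [Real.rpow_neg (by positivity), show (2:ℝ) = ((2:ℕ):ℝ) by norm_num,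
          Real.rpow_natCast]
        simp [Real.norm_eq_abs]
      rw [Real.norm_eq_abs, _root_.abs_of_nonneg (by positivity), hrw]
      calc ‖x‖ ^ n * ‖M x‖ ≤ (1 + |x|) ^ 4 * (C₀ * ((1 + |x|) ^ 6)⁻¹) :=
            mul_le_mul hx (hMdecay x) (norm_nonneg _) (by positivity)
        _ = C₀ * ((1 + |x|) ^ 2)⁻¹ := by
            field_simp
    have hsm : ContDiff ℝ (4:ℕ∞) (𝓕 M) := by
      apply Real.contDiff_fourier
      intro n hn
      exact hmom n hn
    -- derivative setup
    have hFdd : ∀ k : ℕ, k < 4 → ∀ ω : ℝ,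
        HasDerivAt (iteratedDeriv k (𝓕 M)) (iteratedDeriv (k+1) (𝓕 M) ω) ω := by
      intro k hk ω
      have hdiff : Differentiable ℝ (iteratedDeriv k (𝓕 M)) :=
        hsm.differentiable_iteratedDeriv k (by exact_mod_cast hk)
      rw [iteratedDeriv_succ]
      exact (hdiff ω).hasDerivAt
    have hu0 : ∀ ω : ℝ, (1 + 𝓕 M ω) ≠ 0 := by
      intro ω h
      have h2 := hlow ω
      rw [h] at h2
      simp at h2
      linarith
    set f1 : ℝ → ℂ := iteratedDeriv 1 (𝓕 M) with hf1def
    set f2 : ℝ → ℂ := iteratedDeriv 2 (𝓕 M) with hf2def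
    set f3 : ℝ → ℂ := iteratedDeriv 3 (𝓕 M) with hf3def
    set f4 : ℝ → ℂ := iteratedDeriv 4 (𝓕 M) with hf4def
    set h0 : ℝ → ℂ := fun ω => (1 + 𝓕 M ω)⁻¹ with hh0def
    have d01 : ∀ ω : ℝ, HasDerivAt (𝓕 M) (f1 ω) ω := by
      intro ω
      have h := hFdd 0 (by norm_num) ω
      rwa [iteratedDeriv_zero] at h
    have d12 : ∀ ω : ℝ, HasDerivAt f1 (f2 ω) ω := fun ω => hFdd 1 (by norm_num) ω
    have d23 : ∀ ω : ℝ, HasDerivAt f2 (f3 ω) ω := fun ω => hFdd 2 (by norm_num) ω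
    have d34 : ∀ ω : ℝ, HasDerivAt f3 (f4 ω) ω := fun ω => hFdd 3 (by norm_num) ω
    have D1 : ∀ ω : ℝ, HasDerivAt h0 (-(f1 ω) * h0 ω^2) ω := by
      intro ω
      have hu : HasDerivAt (fun ω : ℝ => 1 + 𝓕 M ω) (f1 ω) ω := (d01 ω).const_add 1
      have h2 := (hasDerivAt_const ω (1:ℂ)).div hu (hu0 ω)
      simp only [Pi.div_def, one_div] at h2
      refine h2.congr_deriv ?_
      simp only [hh0def]
      rw [div_eq_mul_inv, inv_pow]
      ring
    have D2 : ∀ ω : ℝ, HasDerivAt (fun ω => -(f1 ω) * h0 ω^2)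
        (-(f2 ω) * h0 ω^2 + 2*(f1 ω)^2*(h0 ω)^3) ω := by
      intro ω
      have h2 := (d12 ω).neg.mul (hasDerivAt_cpow_comp 2 (D1 ω))
      simp only [Pi.mul_def, Pi.neg_def, Pi.add_def, Pi.sub_def] at h2
      refine h2.congr_deriv ?_
      push_cast
      norm_num
      ring
    have D3 : ∀ ω : ℝ, HasDerivAt (fun ω => -(f2 ω) * h0 ω^2 + 2*(f1 ω)^2*(h0 ω)^3)
        (-(f3 ω) * h0 ω^2 + 6*(f1 ω)*(f2 ω)*(h0 ω)^3 - 6*(f1 ω)^3*(h0 ω)^4) ω := by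
      intro ω
      have h2 := ((d23 ω).neg.mul (hasDerivAt_cpow_comp 2 (D1 ω))).add
        (((hasDerivAt_cpow_comp 2 (d12 ω)).const_mul (2:ℂ)).mul (hasDerivAt_cpow_comp 3 (D1 ω)))
      simp only [Pi.mul_def, Pi.neg_def, Pi.add_def, Pi.sub_def] at h2
      refine h2.congr_deriv ?_
      push_cast
      norm_num
      ring
    have D4 : ∀ ω : ℝ, HasDerivAt
        (fun ω => -(f3 ω) * h0 ω^2 + 6*(f1 ω)*(f2 ω)*(h0 ω)^3 - 6*(f1 ω)^3*(h0 ω)^4)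
        (-(f4 ω) * h0 ω^2 + 8*(f1 ω)*(f3 ω)*(h0 ω)^3 + 6*(f2 ω)^2*(h0 ω)^3
          - 36*(f1 ω)^2*(f2 ω)*(h0 ω)^4 + 24*(f1 ω)^4*(h0 ω)^5) ω := by
      intro ω
      have h2 := (((d34 ω).neg.mul (hasDerivAt_cpow_comp 2 (D1 ω))).add
        ((((d12 ω).mul (d23 ω)).const_mul (6:ℂ)).mul (hasDerivAt_cpow_comp 3 (D1 ω)))).sub
        (((hasDerivAt_cpow_comp 3 (d12 ω)).const_mul (6:ℂ)).mul (hasDerivAt_cpow_comp 4 (D1 ω)))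
      simp only [Pi.mul_def, Pi.neg_def, Pi.add_def, Pi.sub_def] at h2
      convert h2 using 1
      · rfl
      · funext x; ring
      · push_cast
        norm_num
        ring
    -- the kernel function g
    set g : ℝ → ℂ := fun ω => (1 + 𝓕 M ω)⁻¹ - 1 with hgdef
    have hgh : g = fun ω => h0 ω - 1 := rfl
    have Dg : ∀ ω : ℝ, HasDerivAt g (-(f1 ω) * h0 ω^2) ω := by
      intro ω
      rw [hgh]
      exact (D1 ω).sub_const 1
    have j1 : iteratedDeriv 1 g = fun ω => -(f1 ω) * h0 ω^2 := by
      rw [iteratedDeriv_one]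
      funext ω
      exact (Dg ω).deriv
    have j2 : iteratedDeriv 2 g
        = fun ω => -(f2 ω) * h0 ω^2 + 2*(f1 ω)^2*(h0 ω)^3 := by
      rw [show (2:ℕ) = 1 + 1 from rfl, iteratedDeriv_succ, j1]
      funext ω
      exact (D2 ω).deriv
    have j3 : iteratedDeriv 3 g
        = fun ω => -(f3 ω) * h0 ω^2 + 6*(f1 ω)*(f2 ω)*(h0 ω)^3 - 6*(f1 ω)^3*(h0 ω)^4 := by
      rw [show (3:ℕ) = 2 + 1 from rfl, iteratedDeriv_succ, j2]
      funext ω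
      exact (D3 ω).deriv
    have j4 : iteratedDeriv 4 g
        = fun ω => -(f4 ω) * h0 ω^2 + 8*(f1 ω)*(f3 ω)*(h0 ω)^3 + 6*(f2 ω)^2*(h0 ω)^3
          - 36*(f1 ω)^2*(f2 ω)*(h0 ω)^4 + 24*(f1 ω)^4*(h0 ω)^5 := by
      rw [show iteratedDeriv 4 g = deriv (iteratedDeriv 3 g) from iteratedDeriv_succ, j3]
      funext ω
      exact (D4 ω).deriv
    -- norm bounds
    have hh0b : ∀ ω : ℝ, ‖h0 ω‖ ≤ c⁻¹ := by
      intro ω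
      have : ‖h0 ω‖ = ‖1 + 𝓕 M ω‖⁻¹ := by rw [hh0def]; simp [norm_inv]
      rw [this]
      exact inv_anti₀ hc (hlow ω)
    have hbb : ∀ ω : ℝ, (0:ℝ) ≤ ((1 + |ω|)^2)⁻¹ ∧ ((1 + |ω|)^2)⁻¹ ≤ 1 := by
      intro ω
      constructor
      · positivity
      · rw [inv_le_one_iff₀]
        right
        nlinarith [abs_nonneg ω]
    have n1 : ∀ ω : ℝ, ‖f1 ω‖ ≤ C₁ * ((1 + |ω|)^2)⁻¹ := fun ω => hder 1 (by norm_num) ω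
    have n2 : ∀ ω : ℝ, ‖f2 ω‖ ≤ C₁ * ((1 + |ω|)^2)⁻¹ := fun ω => hder 2 (by norm_num) ω
    have n3 : ∀ ω : ℝ, ‖f3 ω‖ ≤ C₁ * ((1 + |ω|)^2)⁻¹ := fun ω => hder 3 (by norm_num) ω
    have n4 : ∀ ω : ℝ, ‖f4 ω‖ ≤ C₁ * ((1 + |ω|)^2)⁻¹ := fun ω => hder 4 (by norm_num) ω
    have n1' : ∀ ω : ℝ, ‖f1 ω‖ ≤ C₁ := by
      intro ω
      refine le_trans (n1 ω) ?_
      nlinarith [(hbb ω).1, (hbb ω).2]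
    have n2' : ∀ ω : ℝ, ‖f2 ω‖ ≤ C₁ := by
      intro ω
      refine le_trans (n2 ω) ?_
      nlinarith [(hbb ω).1, (hbb ω).2]
    have n3' : ∀ ω : ℝ, ‖f3 ω‖ ≤ C₁ := by
      intro ω
      refine le_trans (n3 ω) ?_
      nlinarith [(hbb ω).1, (hbb ω).2]
    have he0 : (0:ℝ) ≤ c⁻¹ := by positivity
    -- bound for g itself
    have hgbound : ∀ ω : ℝ, ‖g ω‖ ≤ (C₁ * c⁻¹) * ((1 + |ω|)^2)⁻¹ := by
      intro ω
      have hge : g ω = -(𝓕 M ω) * h0 ω := by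
        rw [hgh]
        simp only [hh0def]
        field_simp [hu0 ω]
        ring
      have hn0 : ‖𝓕 M ω‖ ≤ C₁ * ((1 + |ω|)^2)⁻¹ := by
        have h := hder 0 (by norm_num) ω
        rwa [iteratedDeriv_zero] at h
      rw [hge, norm_mul, norm_neg]
      calc ‖𝓕 M ω‖ * ‖h0 ω‖ ≤ (C₁ * ((1 + |ω|)^2)⁻¹) * c⁻¹ :=
            mul_le_mul hn0 (hh0b ω) (norm_nonneg _) (by positivity)
        _ = (C₁ * c⁻¹) * ((1 + |ω|)^2)⁻¹ := by ring
    have hb1 : ∀ ω : ℝ, ‖-(f1 ω) * h0 ω^2‖ ≤ (C₁ * c⁻¹^2) * ((1 + |ω|)^2)⁻¹ := by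
      intro ω
      rw [norm_mul, norm_neg, norm_pow]
      calc ‖f1 ω‖ * ‖h0 ω‖^2 ≤ (C₁ * ((1 + |ω|)^2)⁻¹) * c⁻¹^2 := by
            gcongr
            · exact n1 ω
            · exact hh0b ω
        _ = (C₁ * c⁻¹^2) * ((1 + |ω|)^2)⁻¹ := by ring
    have hb2 : ∀ ω : ℝ, ‖-(f2 ω) * h0 ω^2 + 2*(f1 ω)^2*(h0 ω)^3‖
        ≤ (C₁ * c⁻¹^2 + 2*C₁^2*c⁻¹^3) * ((1 + |ω|)^2)⁻¹ := by
      intro ω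
      refine le_trans (norm_add_le _ _) ?_
      have T1 : ‖-(f2 ω) * h0 ω^2‖ ≤ (C₁ * ((1 + |ω|)^2)⁻¹) * c⁻¹^2 := by
        rw [norm_mul, norm_neg, norm_pow]
        gcongr
        · exact n2 ω
        · exact hh0b ω
      have T2 : ‖2*(f1 ω)^2*(h0 ω)^3‖ ≤ 2*(C₁*(C₁ * ((1 + |ω|)^2)⁻¹))*c⁻¹^3 := by
        rw [norm_mul, norm_mul, norm_pow, norm_pow]
        have : ‖(2:ℂ)‖ = (2:ℝ) := by norm_num
        rw [this]
        have hf12 : ‖f1 ω‖^2 ≤ C₁*(C₁ * ((1 + |ω|)^2)⁻¹) := by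
          rw [pow_two]
          exact mul_le_mul (n1' ω) (n1 ω) (norm_nonneg _) hC1
        gcongr 2 * ?_ * ?_ ^ 3
        · exact hh0b ω
      calc _ ≤ (C₁ * ((1 + |ω|)^2)⁻¹) * c⁻¹^2 + 2*(C₁*(C₁ * ((1 + |ω|)^2)⁻¹))*c⁻¹^3 :=
            add_le_add T1 T2
        _ = (C₁ * c⁻¹^2 + 2*C₁^2*c⁻¹^3) * ((1 + |ω|)^2)⁻¹ := by ring
    have hb3 : ∀ ω : ℝ, ‖-(f3 ω) * h0 ω^2 + 6*(f1 ω)*(f2 ω)*(h0 ω)^3 - 6*(f1 ω)^3*(h0 ω)^4‖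
        ≤ (C₁ * c⁻¹^2 + 6*C₁^2*c⁻¹^3 + 6*C₁^3*c⁻¹^4) * ((1 + |ω|)^2)⁻¹ := by
      intro ω
      have a1 := n1' ω
      have a1b := n1 ω
      have a2b := n2 ω
      have a3b := n3 ω
      have ah := hh0b ω
      have T1 : ‖-(f3 ω) * h0 ω^2‖ ≤ (C₁ * ((1 + |ω|)^2)⁻¹) * c⁻¹^2 := by
        rw [norm_mul, norm_neg, norm_pow]
        gcongr
      have T2 : ‖6*(f1 ω)*(f2 ω)*(h0 ω)^3‖ ≤ 6*C₁*(C₁ * ((1 + |ω|)^2)⁻¹)*c⁻¹^3 := by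
        rw [norm_mul, norm_mul, norm_mul, norm_pow,
          show ‖(6:ℂ)‖ = (6:ℝ) by norm_num]
        gcongr
      have hf13 : ‖f1 ω‖^3 ≤ C₁^2*(C₁ * ((1 + |ω|)^2)⁻¹) := by
        calc ‖f1 ω‖^3 = ‖f1 ω‖^2 * ‖f1 ω‖ := by ring
          _ ≤ C₁^2 * (C₁ * ((1 + |ω|)^2)⁻¹) := by gcongr
      have T3 : ‖6*(f1 ω)^3*(h0 ω)^4‖ ≤ 6*(C₁^2*(C₁ * ((1 + |ω|)^2)⁻¹))*c⁻¹^4 := by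
        rw [norm_mul, norm_mul, norm_pow, norm_pow,
          show ‖(6:ℂ)‖ = (6:ℝ) by norm_num]
        gcongr
      calc ‖-(f3 ω) * h0 ω^2 + 6*(f1 ω)*(f2 ω)*(h0 ω)^3 - 6*(f1 ω)^3*(h0 ω)^4‖
          ≤ ‖-(f3 ω) * h0 ω^2 + 6*(f1 ω)*(f2 ω)*(h0 ω)^3‖ + ‖6*(f1 ω)^3*(h0 ω)^4‖ :=
            norm_sub_le _ _
        _ ≤ ‖-(f3 ω) * h0 ω^2‖ + ‖6*(f1 ω)*(f2 ω)*(h0 ω)^3‖ + ‖6*(f1 ω)^3*(h0 ω)^4‖ := by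
            gcongr
            exact norm_add_le _ _
        _ ≤ (C₁ * ((1 + |ω|)^2)⁻¹) * c⁻¹^2 + 6*C₁*(C₁ * ((1 + |ω|)^2)⁻¹)*c⁻¹^3
              + 6*(C₁^2*(C₁ * ((1 + |ω|)^2)⁻¹))*c⁻¹^4 := by
            gcongr
        _ = (C₁ * c⁻¹^2 + 6*C₁^2*c⁻¹^3 + 6*C₁^3*c⁻¹^4) * ((1 + |ω|)^2)⁻¹ := by ring
    have hb4 : ∀ ω : ℝ, ‖-(f4 ω) * h0 ω^2 + 8*(f1 ω)*(f3 ω)*(h0 ω)^3 + 6*(f2 ω)^2*(h0 ω)^3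
          - 36*(f1 ω)^2*(f2 ω)*(h0 ω)^4 + 24*(f1 ω)^4*(h0 ω)^5‖
        ≤ (C₁ * c⁻¹^2 + 14*C₁^2*c⁻¹^3 + 36*C₁^3*c⁻¹^4 + 24*C₁^4*c⁻¹^5)
            * ((1 + |ω|)^2)⁻¹ := by
      intro ω
      have a1 := n1' ω
      have a2 := n2' ω
      have a1b := n1 ω
      have a2b := n2 ω
      have a3b := n3 ω
      have a4b := n4 ω
      have ah := hh0b ω
      have T1 : ‖-(f4 ω) * h0 ω^2‖ ≤ (C₁ * ((1 + |ω|)^2)⁻¹) * c⁻¹^2 := by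
        rw [norm_mul, norm_neg, norm_pow]
        gcongr
      have T2 : ‖8*(f1 ω)*(f3 ω)*(h0 ω)^3‖ ≤ 8*C₁*(C₁ * ((1 + |ω|)^2)⁻¹)*c⁻¹^3 := by
        rw [norm_mul, norm_mul, norm_mul, norm_pow,
          show ‖(8:ℂ)‖ = (8:ℝ) by norm_num]
        gcongr
      have hf22 : ‖f2 ω‖^2 ≤ C₁*(C₁ * ((1 + |ω|)^2)⁻¹) := by
        rw [pow_two]
        exact mul_le_mul a2 a2b (norm_nonneg _) hC1
      have T3 : ‖6*(f2 ω)^2*(h0 ω)^3‖ ≤ 6*(C₁*(C₁ * ((1 + |ω|)^2)⁻¹))*c⁻¹^3 := by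
        rw [norm_mul, norm_mul, norm_pow, norm_pow,
          show ‖(6:ℂ)‖ = (6:ℝ) by norm_num]
        gcongr
      have T4 : ‖36*(f1 ω)^2*(f2 ω)*(h0 ω)^4‖ ≤ 36*C₁^2*(C₁ * ((1 + |ω|)^2)⁻¹)*c⁻¹^4 := by
        rw [norm_mul, norm_mul, norm_mul, norm_pow, norm_pow,
          show ‖(36:ℂ)‖ = (36:ℝ) by norm_num]
        gcongr
      have hf14 : ‖f1 ω‖^4 ≤ C₁^3*(C₁ * ((1 + |ω|)^2)⁻¹) := by
        calc ‖f1 ω‖^4 = ‖f1 ω‖^3 * ‖f1 ω‖ := by ring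
          _ ≤ C₁^3 * (C₁ * ((1 + |ω|)^2)⁻¹) := by gcongr
      have T5 : ‖24*(f1 ω)^4*(h0 ω)^5‖ ≤ 24*(C₁^3*(C₁ * ((1 + |ω|)^2)⁻¹))*c⁻¹^5 := by
        rw [norm_mul, norm_mul, norm_pow, norm_pow,
          show ‖(24:ℂ)‖ = (24:ℝ) by norm_num]
        gcongr
      calc ‖-(f4 ω) * h0 ω^2 + 8*(f1 ω)*(f3 ω)*(h0 ω)^3 + 6*(f2 ω)^2*(h0 ω)^3
          - 36*(f1 ω)^2*(f2 ω)*(h0 ω)^4 + 24*(f1 ω)^4*(h0 ω)^5‖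
          ≤ ‖-(f4 ω) * h0 ω^2 + 8*(f1 ω)*(f3 ω)*(h0 ω)^3 + 6*(f2 ω)^2*(h0 ω)^3
              - 36*(f1 ω)^2*(f2 ω)*(h0 ω)^4‖ + ‖24*(f1 ω)^4*(h0 ω)^5‖ := norm_add_le _ _
        _ ≤ ‖-(f4 ω) * h0 ω^2 + 8*(f1 ω)*(f3 ω)*(h0 ω)^3 + 6*(f2 ω)^2*(h0 ω)^3‖
              + ‖36*(f1 ω)^2*(f2 ω)*(h0 ω)^4‖ + ‖24*(f1 ω)^4*(h0 ω)^5‖ := by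
            gcongr
            exact norm_sub_le _ _
        _ ≤ ‖-(f4 ω) * h0 ω^2 + 8*(f1 ω)*(f3 ω)*(h0 ω)^3‖ + ‖6*(f2 ω)^2*(h0 ω)^3‖
              + ‖36*(f1 ω)^2*(f2 ω)*(h0 ω)^4‖ + ‖24*(f1 ω)^4*(h0 ω)^5‖ := by
            gcongr
            exact norm_add_le _ _
        _ ≤ ‖-(f4 ω) * h0 ω^2‖ + ‖8*(f1 ω)*(f3 ω)*(h0 ω)^3‖ + ‖6*(f2 ω)^2*(h0 ω)^3‖
              + ‖36*(f1 ω)^2*(f2 ω)*(h0 ω)^4‖ + ‖24*(f1 ω)^4*(h0 ω)^5‖ := by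
            gcongr
            exact norm_add_le _ _
        _ ≤ (C₁ * ((1 + |ω|)^2)⁻¹) * c⁻¹^2 + 8*C₁*(C₁ * ((1 + |ω|)^2)⁻¹)*c⁻¹^3
              + 6*(C₁*(C₁ * ((1 + |ω|)^2)⁻¹))*c⁻¹^3
              + 36*C₁^2*(C₁ * ((1 + |ω|)^2)⁻¹)*c⁻¹^4
              + 24*(C₁^3*(C₁ * ((1 + |ω|)^2)⁻¹))*c⁻¹^5 := by
            gcongr
        _ = (C₁ * c⁻¹^2 + 14*C₁^2*c⁻¹^3 + 36*C₁^3*c⁻¹^4 + 24*C₁^4*c⁻¹^5)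
              * ((1 + |ω|)^2)⁻¹ := by ring
    -- continuity
    have cF : Continuous (𝓕 M) := hsm.continuous
    have cf1 : Continuous f1 := hsm.continuous_iteratedDeriv 1 (by exact_mod_cast (by norm_num : (1:ℕ) ≤ 4))
    have cf2 : Continuous f2 := hsm.continuous_iteratedDeriv 2 (by norm_num)
    have cf3 : Continuous f3 := hsm.continuous_iteratedDeriv 3 (by norm_num)
    have cf4 : Continuous f4 := hsm.continuous_iteratedDeriv 4 (by norm_num)
    have ch : Continuous h0 := by
      rw [hh0def]
      exact (continuous_const.add cF).inv₀ hu0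
    have cg : Continuous g := by
      rw [hgh]
      exact ch.sub continuous_const
    have cc1 : Continuous (fun ω => -(f1 ω) * h0 ω^2) := cf1.neg.mul (ch.pow 2)
    have cc2 : Continuous (fun ω => -(f2 ω) * h0 ω^2 + 2*(f1 ω)^2*(h0 ω)^3) :=
      (cf2.neg.mul (ch.pow 2)).add ((continuous_const.mul (cf1.pow 2)).mul (ch.pow 3))
    have cc3 : Continuous (fun ω => -(f3 ω) * h0 ω^2 + 6*(f1 ω)*(f2 ω)*(h0 ω)^3
        - 6*(f1 ω)^3*(h0 ω)^4) :=
      ((cf3.neg.mul (ch.pow 2)).add (((continuous_const.mul cf1).mul cf2).mul (ch.pow 3))).sub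
        ((continuous_const.mul (cf1.pow 3)).mul (ch.pow 4))
    have cc4 : Continuous (fun ω => -(f4 ω) * h0 ω^2 + 8*(f1 ω)*(f3 ω)*(h0 ω)^3
        + 6*(f2 ω)^2*(h0 ω)^3 - 36*(f1 ω)^2*(f2 ω)*(h0 ω)^4 + 24*(f1 ω)^4*(h0 ω)^5) :=
      (((((cf4.neg.mul (ch.pow 2)).add
        (((continuous_const.mul cf1).mul cf3).mul (ch.pow 3))).add
        ((continuous_const.mul (cf2.pow 2)).mul (ch.pow 3))).sub
        (((continuous_const.mul (cf1.pow 2)).mul cf2).mul (ch.pow 4))).add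
        ((continuous_const.mul (cf1.pow 4)).mul (ch.pow 5)))
    -- integrability of iterated derivatives
    have hint : ∀ n : ℕ, (n : ℕ∞) ≤ (4:ℕ∞) → Integrable (iteratedDeriv n g) := by
      intro n hn
      have hn4 : n ≤ 4 := by exact_mod_cast hn
      interval_cases n
      · rw [iteratedDeriv_zero]
        exact aux_integrable cg.aestronglyMeasurable hgbound
      · rw [j1]
        exact aux_integrable cc1.aestronglyMeasurable hb1
      · rw [j2]
        exact aux_integrable cc2.aestronglyMeasurable hb2
      · rw [j3]
        exact aux_integrable cc3.aestronglyMeasurable hb3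
      · rw [j4]
        exact aux_integrable cc4.aestronglyMeasurable hb4
    have hgsm : ContDiff ℝ (4:ℕ∞) g := by
      rw [hgdef]
      exact ((contDiff_const.add hsm).inv hu0).sub contDiff_const
    have key := Real.fourier_iteratedDeriv (N := (4:ℕ∞)) (n := 4) hgsm hint
      (by exact_mod_cast (by norm_num : (4:ℕ) ≤ 4))
    have hFg : ∀ x : ℝ, ‖𝓕 g x‖ ≤ ∫ ω : ℝ, ‖g ω‖ := fun x =>
      VectorFourier.norm_fourierIntegral_le_integral_norm _ _ _ _ _
    have hFg4 : ∀ x : ℝ, ‖𝓕 (iteratedDeriv 4 g) x‖ ≤ ∫ ω : ℝ, ‖iteratedDeriv 4 g ω‖ := fun x =>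
      VectorFourier.norm_fourierIntegral_le_integral_norm _ _ _ _ _
    set A := ∫ ω : ℝ, ‖g ω‖ with hAdef
    set B := ∫ ω : ℝ, ‖iteratedDeriv 4 g ω‖ with hBdef
    have hA0 : 0 ≤ A := integral_nonneg fun ω => norm_nonneg _
    have hB0 : 0 ≤ B := integral_nonneg fun ω => norm_nonneg _
    refine ⟨16*A + 16*B + 1, by linarith, ?_⟩
    intro t
    have hft : (𝓕⁻ g) t = 𝓕 g (-t) := Real.fourierInv_eq_fourier_neg g t
    rw [hft]
    have h1 : ‖𝓕 g (-t)‖ ≤ A := hFg (-t)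
    have hkey := congrFun key (-t)
    have h2 : (2*π*|t|)^4 * ‖𝓕 g (-t)‖ ≤ B := by
      have hn := hFg4 (-t)
      rw [hkey, norm_smul] at hn
      have hnorm : ‖(2*(π:ℂ)*Complex.I*((-t:ℝ):ℂ))^4‖ = (2*π*|t|)^4 := by
        rw [norm_pow]
        congr 1
        rw [norm_mul, norm_mul, norm_mul]
        simp [Complex.norm_real, Real.norm_eq_abs, _root_.abs_of_pos Real.pi_pos]
      rwa [hnorm] at hn
    have h3 : t^4 * ‖𝓕 g (-t)‖ ≤ B := by
      refine le_trans ?_ h2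
      have h1p : |t|^4 = t^4 := by
        rw [← abs_pow]
        exact _root_.abs_of_nonneg (by positivity)
      have ht4 : t^4 ≤ (2*π*|t|)^4 := by
        have h2p : (1:ℝ) ≤ (2*π)^4 := one_le_pow₀ (by nlinarith [Real.pi_gt_three])
        calc t^4 = 1 * |t|^4 := by rw [h1p]; ring
          _ ≤ (2*π)^4 * |t|^4 := by gcongr
          _ = (2*π*|t|)^4 := by ring
      exact mul_le_mul_of_nonneg_right ht4 (norm_nonneg _)
    have hp : (0:ℝ) < (1+|t|)^4 := by positivity
    rw [show (16*A+16*B+1) * ((1+|t|)^4)⁻¹ = (16*A+16*B+1)/((1+|t|)^4) from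
      (div_eq_mul_inv _ _).symm, le_div_iff₀ hp]
    have h1p : |t|^4 = t^4 := by
      rw [← abs_pow]
      exact _root_.abs_of_nonneg (by positivity)
    have hexp : (1+|t|)^4 ≤ 16 + 16*t^4 := by
      nlinarith [abs_nonneg t, sq_nonneg (|t| - 1), sq_nonneg (|t|^2 - 1),
        sq_nonneg (|t|^2 - |t|), h1p]
    nlinarith [mul_le_mul_of_nonneg_left hexp (norm_nonneg (𝓕 g (-t))), h1, h3,
      norm_nonneg (𝓕 g (-t))]
end
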